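/- Let T ⊂ 𝕋^d and I ⊂ ℕ₀^d be finite, with columns a_h, h ∈ M(I), of the Fourier matrix F(T, M(I)). Suppose that for each k ∈ I there exists some h ∈ M({k}) such that a_h ∉ span{a_l : l ∈ M(I) \ {h}}. Then the Chebyshev matrix C(Cos(T), I) has full column rank |I|. -/

import Mathlib

open Real Complex

/-- The normalized `d`-variate Chebyshev polynomial. -/
noncomputable def chebT {d : ℕ} (k : Fin d → ℕ) (x : Fin d → ℝ) : ℝ :=
  ∏ j, if k j = 0 then 1 else Real.sqrt 2 * Real.cos (k j * Real.arccos (x j))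

/-- The mirror set `M({k})` of a single multi-index. -/
def mirror {d : ℕ} (k : Fin d → ℕ) : Finset (Fin d → ℤ) :=
  Finset.image (fun l : Fin d → Bool => fun j => if l j then (k j : ℤ) else -(k j : ℤ))
    Finset.univ

/-- The mirrored index set `M(I) = ⋃_{k ∈ I} M({k})`. -/
def mirrorSet {d : ℕ} (I : Finset (Fin d → ℕ)) : Finset (Fin d → ℤ) :=
  I.biUnion mirror

/-- The Chebyshev sampling matrix `C(X,I) = (T_k(x))_{x∈X,k∈I}`. -/
noncomputable def chebMatrix {d : ℕ} (X : Finset (Fin d → ℝ)) (I : Finset (Fin d → ℕ)) :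
    Matrix {x // x ∈ X} {k // k ∈ I} ℝ :=
  fun x k => chebT (k : Fin d → ℕ) (x : Fin d → ℝ)

/-- The Fourier sampling matrix `F(T,J) = (e^{2πi h·t})_{t∈T,h∈J}`. -/
noncomputable def fourierMatrix {d : ℕ} (T : Finset (Fin d → ℝ)) (J : Finset (Fin d → ℤ)) :
    Matrix {t // t ∈ T} {h // h ∈ J} ℂ :=
  fun t h => Complex.exp (2 * Real.pi * Complex.I * ∑ j, ((h : Fin d → ℤ) j : ℂ) * ((t : Fin d → ℝ) j : ℂ))

lemma cos_natmul_arccos_cos (n : ℕ) (θ : ℝ) :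
    Real.cos (n * Real.arccos (Real.cos θ)) = Real.cos (n * θ) := by
  have h1 := Polynomial.Chebyshev.T_real_cos (Real.arccos (Real.cos θ)) n
  have h2 := Polynomial.Chebyshev.T_real_cos θ n
  rw [Real.cos_arccos (Real.neg_one_le_cos θ) (Real.cos_le_one θ)] at h1
  have := h1.symm.trans h2
  exact_mod_cast this

def hsgn {d : ℕ} (k : Fin d → ℕ) (s : Finset (Fin d)) : Fin d → ℤ :=
  fun j => if j ∈ s then (k j : ℤ) else -(k j : ℤ)

noncomputable def alphaC {d : ℕ} (k : Fin d → ℕ) : ℂ :=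
  ∏ j, if k j = 0 then (1/2 : ℂ) else (Real.sqrt 2 / 2 : ℂ)

lemma alphaC_ne_zero {d : ℕ} (k : Fin d → ℕ) : alphaC k ≠ 0 := by
  apply Finset.prod_ne_zero_iff.mpr
  intro j _
  split
  · norm_num
  · simp only [ne_eq, div_eq_zero_iff, Complex.ofReal_eq_zero]
    push_neg
    exact ⟨Real.sqrt_ne_zero'.mpr (by norm_num), by norm_num⟩

lemma hsgn_mem_mirror {d : ℕ} (k : Fin d → ℕ) (s : Finset (Fin d)) :
    hsgn k s ∈ mirror k := by
  rw [mirror, Finset.mem_image]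
  refine ⟨fun j => decide (j ∈ s), Finset.mem_univ _, ?_⟩
  funext j
  simp [hsgn]

lemma mem_mirror_natAbs {d : ℕ} {k : Fin d → ℕ} {h : Fin d → ℤ} (hm : h ∈ mirror k) :
    ∀ j, k j = (h j).natAbs := by
  rw [mirror, Finset.mem_image] at hm
  obtain ⟨l, -, rfl⟩ := hm
  intro j
  by_cases hl : l j <;> simp [hl]

lemma mem_mirror_exists_hsgn {d : ℕ} {k : Fin d → ℕ} {h : Fin d → ℤ} (hm : h ∈ mirror k) :
    ∃ s : Finset (Fin d), hsgn k s = h := by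
  rw [mirror, Finset.mem_image] at hm
  obtain ⟨l, -, rfl⟩ := hm
  refine ⟨Finset.univ.filter (fun j => l j = true), ?_⟩
  funext j
  simp [hsgn]

lemma cheb_expand {d : ℕ} (k : Fin d → ℕ) (t : Fin d → ℝ) :
    ((chebT k (fun j => Real.cos (2 * Real.pi * t j)) : ℝ) : ℂ) =
      ∑ s : Finset (Fin d), alphaC k *
        ∏ j, Complex.exp (2 * Real.pi * Complex.I * ((hsgn k s j : ℤ) : ℂ) * (t j : ℂ)) := by
  classical
  set F : Fin d → Bool → ℂ := fun j b =>
    (if k j = 0 then (1/2 : ℂ) else (Real.sqrt 2 / 2 : ℂ)) *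
      Complex.exp (2 * Real.pi * Complex.I * ((if b then (k j : ℤ) else -(k j : ℤ)) : ℂ) * (t j : ℂ))
    with hF
  have step1 : ((chebT k (fun j => Real.cos (2 * Real.pi * t j)) : ℝ) : ℂ) =
      ∏ j, (F j true + F j false) := by
    rw [chebT]
    push_cast
    refine Finset.prod_congr rfl (fun j _ => ?_)
    by_cases hk : k j = 0
    · simp [hF, hk]
      norm_num
    · simp only [hF, hk, if_false, if_true, Bool.false_eq_true]
      rw [cos_natmul_arccos_cos]
      rw [Complex.ofReal_mul, Complex.ofReal_cos]
      have h2c := Complex.two_cos (((k j : ℝ) * (2 * Real.pi * t j) : ℝ) : ℂ)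
      have hcos : (Complex.cos (((k j : ℝ) * (2 * Real.pi * t j) : ℝ) : ℂ)) =
          (Complex.exp ((((k j : ℝ) * (2 * Real.pi * t j) : ℝ) : ℂ) * Complex.I) +
           Complex.exp (-(((k j : ℝ) * (2 * Real.pi * t j) : ℝ) : ℂ) * Complex.I)) / 2 := by
        rw [← h2c]; ring
      push_cast at hcos ⊢
      rw [hcos]
      rw [show ((k j : ℂ) * (2 * Real.pi * t j)) * Complex.I
            = 2 * Real.pi * Complex.I * (k j : ℂ) * t j by ring]
      rw [show (-((k j : ℂ) * (2 * Real.pi * t j))) * Complex.I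
            = 2 * Real.pi * Complex.I * (-(k j : ℂ)) * t j by ring]
      ring
  rw [step1, Finset.prod_add]
  rw [Finset.powerset_univ]
  refine Finset.sum_congr rfl (fun s _ => ?_)
  have : (∏ j ∈ s, F j true) * ∏ j ∈ Finset.univ \ s, F j false
      = ∏ j, (if j ∈ s then F j true else F j false) := by
    rw [Finset.prod_ite]
    congr 1
    · congr 1; ext j; simp
    · congr 1; ext j; simp
  rw [this]
  rw [show alphaC k * ∏ j, Complex.exp (2 * Real.pi * Complex.I * ((hsgn k s j : ℤ) : ℂ) * (t j : ℂ))
      = ∏ j, ((if k j = 0 then (1/2 : ℂ) else (Real.sqrt 2 / 2 : ℂ)) *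
          Complex.exp (2 * Real.pi * Complex.I * ((hsgn k s j : ℤ) : ℂ) * (t j : ℂ)))
    from by rw [Finset.prod_mul_distrib, alphaC]]
  refine Finset.prod_congr rfl (fun j _ => ?_)
  by_cases hj : j ∈ s <;> simp [hF, hsgn, hj]

lemma prod_exp {d : ℕ} (h : Fin d → ℤ) (t : Fin d → ℝ) :
    ∏ j, Complex.exp (2 * Real.pi * Complex.I * ((h j : ℤ) : ℂ) * (t j : ℂ))
      = Complex.exp (2 * Real.pi * Complex.I * ∑ j, ((h j : ℤ) : ℂ) * (t j : ℂ)) := by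
  rw [← Complex.exp_sum]
  congr 1
  rw [Finset.mul_sum]
  exact Finset.sum_congr rfl fun j _ => by ring

/-- Corollary `matrix_C_full_crank`: if for each `k ∈ I` there is some
`h ∈ M({k})` whose column of `F(T,M(I))` is not in the span of all other columns, then
the Chebyshev matrix `C(Cos(T),I)` has full column rank `|I|`. -/
theorem stmt_11 {d : ℕ} (T : Finset (Fin d → ℝ)) (X : Finset (Fin d → ℝ))
    (I : Finset (Fin d → ℕ))
    (hX : X = @Finset.image _ _ (Classical.decEq _)
      (fun t : Fin d → ℝ => fun j => Real.cos (2 * Real.pi * t j)) T)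
    (hNISOR : ∀ k ∈ I, ∃ h : Fin d → ℤ, ∃ hmem : h ∈ mirrorSet I, h ∈ mirror k ∧
      (fun t : {t // t ∈ T} => fourierMatrix T (mirrorSet I) t ⟨h, hmem⟩) ∉
        Submodule.span ℂ
          ((fun l : {l // l ∈ mirrorSet I} =>
              (fun t : {t // t ∈ T} => fourierMatrix T (mirrorSet I) t l))
            '' {l | l ≠ ⟨h, hmem⟩})) :
    (chebMatrix X I).rank = I.card := by
  classical
  -- columns of the Chebyshev matrix
  have hli : LinearIndependent ℝ (chebMatrix X I).col := by
    rw [Fintype.linearIndependent_iff]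
    intro c hc k₀
    by_contra hck₀
    obtain ⟨h₀, hmem, hmir, hspan⟩ := hNISOR k₀.1 k₀.2
    -- the fourier columns
    set colF : {l // l ∈ mirrorSet I} → ({t // t ∈ T} → ℂ) :=
      fun l t => fourierMatrix T (mirrorSet I) t l with hcolF
    -- index of pairs
    set φ : ({k // k ∈ I} × Finset (Fin d)) → {l // l ∈ mirrorSet I} :=
      fun p => ⟨hsgn p.1.1 p.2, Finset.mem_biUnion.mpr ⟨p.1.1, p.1.2, hsgn_mem_mirror _ _⟩⟩ with hφ
    set w : ({k // k ∈ I} × Finset (Fin d)) → ℂ := fun p => (c p.1 : ℂ) * alphaC p.1.1 with hw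
    set G : {l // l ∈ mirrorSet I} → ℂ :=
      fun m => ∑ p ∈ Finset.univ.filter (fun p => φ p = m), w p with hG
    -- pointwise identity on T
    have hpt : ∀ t : {t // t ∈ T}, ∑ m, G m * colF m t = 0 := by
      intro t
      have hxt : (fun j => Real.cos (2 * Real.pi * t.1 j)) ∈ X := by
        rw [hX]
        exact @Finset.mem_image_of_mem _ _ (Classical.decEq _) _ _ _ t.2
      have hrow : ∑ k : {k // k ∈ I}, c k * chebT k.1 (fun j => Real.cos (2 * Real.pi * t.1 j)) = 0 := by
        have := congrFun hc ⟨_, hxt⟩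
        simpa [Finset.sum_apply, chebMatrix, Matrix.transpose, Matrix.col_apply] using this
      have hrowC : ∑ k : {k // k ∈ I},
          (c k : ℂ) * ((chebT k.1 (fun j => Real.cos (2 * Real.pi * t.1 j)) : ℝ) : ℂ) = 0 := by
        have := congrArg (Complex.ofReal) hrow
        push_cast at this
        simpa using this
      have hexp : ∑ p : {k // k ∈ I} × Finset (Fin d), w p * colF (φ p) t = 0 := by
        rw [Fintype.sum_prod_type]
        rw [← hrowC]
        refine Finset.sum_congr rfl (fun k _ => ?_)
        rw [cheb_expand, Finset.mul_sum]
        refine Finset.sum_congr rfl (fun s _ => ?_)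
        simp only [hw, hcolF, hφ, fourierMatrix]
        rw [← prod_exp]
        ring
      rw [← hexp, ← Finset.sum_fiberwise Finset.univ φ (fun p => w p * colF (φ p) t)]
      refine Finset.sum_congr rfl (fun m _ => ?_)
      rw [hG, Finset.sum_mul]
      refine Finset.sum_congr rfl (fun p hp => ?_)
      rw [(Finset.mem_filter.mp hp).2]
    -- function-level identity
    have hzero : ∑ m, G m • colF m = 0 := by
      funext t
      simpa [Finset.sum_apply, smul_eq_mul] using hpt t
    set m₀ : {l // l ∈ mirrorSet I} := ⟨h₀, hmem⟩ with hm₀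
    -- G m₀ ≠ 0
    have hfiber : ∀ p ∈ Finset.univ.filter (fun p => φ p = m₀), w p = (c k₀ : ℂ) * alphaC k₀.1 := by
      intro p hp
      have hpφ : hsgn p.1.1 p.2 = h₀ := congrArg Subtype.val (Finset.mem_filter.mp hp).2
      have hk : p.1 = k₀ := by
        apply Subtype.ext
        funext j
        have h1 := mem_mirror_natAbs (hpφ ▸ hsgn_mem_mirror p.1.1 p.2) j
        have h2 := mem_mirror_natAbs hmir j
        rw [h1, h2]
      show (c p.1 : ℂ) * alphaC p.1.1 = _
      rw [hk]
    have hne : (Finset.univ.filter (fun p => φ p = m₀)).Nonempty := by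
      obtain ⟨s₀, hs₀⟩ := mem_mirror_exists_hsgn hmir
      exact ⟨(k₀, s₀), Finset.mem_filter.mpr ⟨Finset.mem_univ _, Subtype.ext hs₀⟩⟩
    have hGm₀ : G m₀ ≠ 0 := by
      show (∑ p ∈ Finset.univ.filter (fun p => φ p = m₀), w p) ≠ 0
      rw [Finset.sum_congr rfl hfiber, Finset.sum_const, nsmul_eq_mul]
      refine mul_ne_zero ?_ (mul_ne_zero ?_ ?_)
      · exact Nat.cast_ne_zero.mpr (Finset.card_ne_zero_of_mem hne.choose_spec)
      · exact Complex.ofReal_ne_zero.mpr hck₀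
      · exact alphaC_ne_zero _
    -- derive membership in span, contradiction
    apply hspan
    have hexpr : colF m₀ = (-(G m₀)⁻¹) • ∑ m ∈ Finset.univ.erase m₀, G m • colF m := by
      have hsplit := Finset.add_sum_erase Finset.univ (fun m => G m • colF m) (Finset.mem_univ m₀)
      rw [hzero] at hsplit
      have h2 : G m₀ • colF m₀ = -∑ m ∈ Finset.univ.erase m₀, G m • colF m :=
        eq_neg_of_add_eq_zero_left hsplit
      calc colF m₀ = (G m₀)⁻¹ • (G m₀ • colF m₀) := by
            rw [smul_smul, inv_mul_cancel₀ hGm₀, one_smul]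
        _ = (-(G m₀)⁻¹) • ∑ m ∈ Finset.univ.erase m₀, G m • colF m := by
            rw [h2, smul_neg, ← neg_smul]
    show (fun t => fourierMatrix T (mirrorSet I) t m₀) ∈ _
    have hcol_eq : (fun t => fourierMatrix T (mirrorSet I) t m₀) = colF m₀ := rfl
    rw [hcol_eq, hexpr]
    refine Submodule.smul_mem _ _ (Submodule.sum_mem _ (fun m hm => ?_))
    refine Submodule.smul_mem _ _ (Submodule.subset_span ?_)
    exact ⟨m, Finset.ne_of_mem_erase hm, rfl⟩
  rw [Matrix.rank_eq_finrank_span_cols, finrank_span_eq_card hli, Fintype.card_coe]
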